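/- Let λ₁, λ₂, μ₁, μ₂ > 0, λ = λ₁+λ₂. The resultant (with respect to w) of the cubics R₁(w,z) and R₂(w,z) equals 8λ₁λ₂μ₁μ₂ · z · P(z) · (2z+μ₁+μ₂)², where P(z) = z² + (μ₁+μ₂−λ)z + μ₁μ₂(1−ϱ) and ϱ = λ₁/μ₁+λ₂/μ₂. -/

import Mathlib

/-- The resultant of two monic cubics, expressed as the determinant of their
Sylvester matrix. -/
noncomputable def sylvesterRes3 (p2 p1 p0 q2 q1 q0 : ℝ) : ℝ :=
  Matrix.det !![1, p2, p1, p0, 0, 0;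
                0, 1, p2, p1, p0, 0;
                0, 0, 1, p2, p1, p0;
                1, q2, q1, q0, 0, 0;
                0, 1, q2, q1, q0, 0;
                0, 0, 1, q2, q1, q0]

set_option maxRecDepth 10000 in
set_option maxHeartbeats 4000000 in
lemma syl_eq (p2 p1 p0 q2 q1 q0 : ℝ) :
    sylvesterRes3 p2 p1 p0 q2 q1 q0 =
    q0*q0*q0 - 3*p0*q0*q0 - p0*q1*q1*q1 + 3*p0*q2*q1*q0 + 3*p0*p0*q0 - 3*p0*p0*q2*q1 + p0*p0*q2*q2*q2 - p0*p0*p0 + p1*q1*q1*q0 - 2*p1*q2*q0*q0 + 2*p1*p0*q1*q1 + p1*p0*q2*q0 - p1*p0*q2*q2*q1 + p1*p0*p0*q2 - 2*p1*p1*q1*q0 + p1*p1*q2*q2*q0 - p1*p1*p0*q1 + p1*p1*p1*q0 - p2*q1*q0*q0 - p2*p0*q1*q0 + p2*p0*q2*q1*q1 - 2*p2*p0*q2*q2*q0 + 2*p2*p0*p0*q1 - p2*p0*p0*q2*q2 + 3*p2*p1*q0*q0 - p2*p1*q2*q1*q0 - 3*p2*p1*p0*q0 + p2*p1*p0*q2*q1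 - p2*p1*p1*q2*q0 + p2*p2*q2*q0*q0 - p2*p2*p0*q1*q1 + 2*p2*p2*p0*q2*q0 + p2*p2*p1*q1*q0 - p2*p2*p2*q0*q0 := by
  simp [sylvesterRes3, Matrix.det_succ_row_zero, Fin.sum_univ_succ, Fin.succAbove,
    Fin.lt_def, Fin.castSucc, Fin.castAdd, Fin.castLE, -Fin.val_pos_iff]
  ring

set_option maxHeartbeats 1000000 in
theorem stmt_14 (l1 l2 m1 m2 : ℝ) (hl1 : 0 < l1) (hl2 : 0 < l2)
    (hm1 : 0 < m1) (hm2 : 0 < m2) :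
    let l : ℝ := l1 + l2
    let P : ℝ → ℝ := fun z => z ^ 2 + (m1 + m2 - l) * z + m1 * m2 * (1 - (l1 / m1 + l2 / m2))
    ∀ z : ℝ,
      sylvesterRes3 (-(l - m1 + m2 - z)) (l1 * m2 - l2 * m1 - m1 * m2 - 2 * m2 * z - z ^ 2)
          (-(z * P z))
        (l + m1 - m2 - z) (l2 * m1 - l1 * m2 - m1 * m2 - 2 * m1 * z - z ^ 2) (z * P z)
      = 8 * l1 * l2 * m1 * m2 * z * P z * (2 * z + m1 + m2) ^ 2 := by
  intro l P z
  rw [syl_eq]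
  simp only [P, l]
  field_simp
  ring
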